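/- Let m ≥ 1, let F_i, F_j ∈ ℝ^{m×2}, and set G_i = F_i F_iᵀ and G_j = F_j F_jᵀ. Then tr(G_i) + tr(G_j) − 2·tr( ( G_i^{1/2} G_j G_i^{1/2} )^{1/2} ) = inf over orthogonal Q ∈ O(2) of ‖F_j Q − F_i‖_F²; that is, the trace-based expression for the squared distance between Gram matrices coincides with the Procrustes-type expression min_{Q ∈ O(2)} ‖F_j Q − F_i‖_F². -/

import Mathlib

open Matrix

/-- The Frobenius norm of a real matrix. -/
noncomputable def frobNorm {m n : ℕ} (A : Matrix (Fin m) (Fin n) ℝ) : ℝ :=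
  Real.sqrt (Matrix.trace (Aᵀ * A))

open scoped ComplexOrder in
/-- The positive semidefinite square root of a positive semidefinite matrix
(removed from Mathlib; restored with its old definition). -/
noncomputable def Matrix.PosSemidef.sqrt {n : Type*} [Fintype n] [DecidableEq n]
    {𝕜 : Type*} [RCLike 𝕜] {A : Matrix n n 𝕜} (hA : A.PosSemidef) : Matrix n n 𝕜 :=
  (hA.1.eigenvectorUnitary : Matrix n n 𝕜) * diagonal ((↑) ∘ (√·) ∘ hA.1.eigenvalues) *
    (star hA.1.eigenvectorUnitary : Matrix n n 𝕜)

open scoped MatrixOrder in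
lemma Matrix.PosSemidef.sqrt_eq_CFC {n : Type*} [Fintype n] [DecidableEq n] {A : Matrix n n ℝ}
    (hA : A.PosSemidef) : hA.sqrt = CFC.sqrt A := by
  rw [CFC.sqrt_eq_real_sqrt A hA.nonneg, cfcₙ_eq_cfc, hA.1.cfc_eq]
  rfl

open scoped MatrixOrder in
lemma Matrix.PosSemidef.posSemidef_sqrt {n : Type*} [Fintype n] [DecidableEq n]
    {A : Matrix n n ℝ} (hA : A.PosSemidef) : hA.sqrt.PosSemidef := by
  rw [hA.sqrt_eq_CFC]
  exact (CFC.sqrt_nonneg A).posSemidef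

open scoped MatrixOrder in
lemma Matrix.PosSemidef.sqrt_mul_self {n : Type*} [Fintype n] [DecidableEq n]
    {A : Matrix n n ℝ} (hA : A.PosSemidef) : hA.sqrt * hA.sqrt = A := by
  rw [hA.sqrt_eq_CFC]
  exact CFC.sqrt_mul_sqrt_self A hA.nonneg

lemma Matrix.PosSemidef.sq_sqrt {n : Type*} [Fintype n] [DecidableEq n]
    {A : Matrix n n ℝ} (hA : A.PosSemidef) : hA.sqrt ^ 2 = A := by
  rw [pow_two, hA.sqrt_mul_self]

open scoped MatrixOrder in
lemma Matrix.PosSemidef.eq_sqrt_of_sq_eq {n : Type*} [Fintype n] [DecidableEq n]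
    {A B : Matrix n n ℝ} (hB : B.PosSemidef) (hA : A.PosSemidef) (h : B ^ 2 = A) :
    B = hA.sqrt := by
  rw [hA.sqrt_eq_CFC]
  exact (CFC.sqrt_unique (by rw [← pow_two, h]) hB.nonneg).symm


lemma tmul_eq_zero {m n : ℕ} {X : Matrix (Fin m) (Fin n) ℝ} (h : Xᵀ * X = 0) : X = 0 := by
  rw [← Matrix.conjTranspose_eq_transpose_of_trivial] at h
  exact Matrix.conjTranspose_mul_self_eq_zero.mp h

lemma smul_posSemidef {n : ℕ} {S : Matrix (Fin n) (Fin n) ℝ} (hS : S.PosSemidef)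
    {c : ℝ} (hc : 0 ≤ c) : (c • S).PosSemidef := by
  refine Matrix.PosSemidef.of_dotProduct_mulVec_nonneg ?_ fun x => ?_
  · unfold Matrix.IsHermitian
    rw [Matrix.conjTranspose_smul, hS.1]
    simp
  · have := hS.dotProduct_mulVec_nonneg x
    rw [Matrix.smul_mulVec, dotProduct_smul]
    exact mul_nonneg hc this

lemma posSemidef_fin_two {W : Matrix (Fin 2) (Fin 2) ℝ} (hsym : Wᵀ = W)
    (h00 : 0 ≤ W 0 0) (h11 : 0 ≤ W 1 1)
    (hdet : 0 ≤ W 0 0 * W 1 1 - W 0 1 * W 1 0) :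
    W.PosSemidef := by
  have h10 : W 1 0 = W 0 1 := by
    conv_lhs => rw [← hsym]
    rfl
  refine Matrix.PosSemidef.of_dotProduct_mulVec_nonneg ?_ fun x => ?_
  · unfold Matrix.IsHermitian
    rw [Matrix.conjTranspose_eq_transpose_of_trivial, hsym]
  · simp only [dotProduct, Matrix.mulVec, Fin.sum_univ_two, Pi.star_apply, star_trivial]
    rw [h10] at hdet ⊢
    rcases eq_or_lt_of_le h00 with h0 | h0
    · have : W 0 1 = 0 := by nlinarith [sq_nonneg (W 0 1)]
      rw [this, ← h0]
      nlinarith [sq_nonneg (x 1)]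
    · nlinarith [sq_nonneg (W 0 0 * x 0 + W 0 1 * x 1), mul_nonneg (le_of_lt h0) (sq_nonneg (x 1))]

set_option maxHeartbeats 2000000 in
lemma trace_sqrt_AAT {m : ℕ} (A : Matrix (Fin m) (Fin 2) ℝ)
    (C : Matrix (Fin 2) (Fin 2) ℝ) (hN : Aᵀ * A = C * Cᵀ)
    (hM : (A * Aᵀ).PosSemidef) :
    Matrix.trace hM.sqrt
      = Real.sqrt (Matrix.trace (C * Cᵀ) + 2 * |C.det|) := by
  obtain ⟨τ, hτdef⟩ : ∃ t, t = Matrix.trace (C * Cᵀ) := ⟨_, rfl⟩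
  obtain ⟨s, hsdef⟩ : ∃ t, t = |C.det| := ⟨_, rfl⟩
  rw [← hτdef, ← hsdef]
  have hs2 : s ^ 2 = C.det ^ 2 := by rw [hsdef]; exact sq_abs _
  have hs0 : 0 ≤ s := by rw [hsdef]; exact abs_nonneg _
  have hτ : τ = C 0 0^2 + C 0 1^2 + C 1 0^2 + C 1 1^2 := by
    rw [hτdef]
    simp only [Matrix.trace_fin_two, Matrix.mul_apply, Fin.sum_univ_two,
      Matrix.transpose_apply]
    ring
  have hτ0 : 0 ≤ τ := by rw [hτ]; positivity
  have hNP : (C * Cᵀ) * ((C * Cᵀ) - τ • 1) = (-(C.det)^2) • (1 : Matrix (Fin 2) (Fin 2) ℝ) := by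
    rw [hτdef]
    ext i j
    fin_cases i <;> fin_cases j <;>
      simp [Matrix.mul_apply, Fin.sum_univ_two, Matrix.trace_fin_two, Matrix.det_fin_two,
        Matrix.one_apply] <;> ring
  have hPsym : ((C * Cᵀ) - τ • 1)ᵀ = (C * Cᵀ) - τ • 1 := by
    simp [Matrix.transpose_sub, Matrix.transpose_mul]
  by_cases hC : C = 0
  · have hA0 : A = 0 := tmul_eq_zero (by rw [hN, hC]; simp)
    have h0 : (0 : Matrix (Fin m) (Fin m) ℝ).PosSemidef :=
      ⟨Matrix.isHermitian_zero, fun x => by simp⟩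
    have heq : (0 : Matrix (Fin m) (Fin m) ℝ) = hM.sqrt :=
      h0.eq_sqrt_of_sq_eq hM (by rw [hA0]; simp [pow_two])
    have hτz : τ = 0 := by rw [hτdef, hC]; simp
    have hsz : s = 0 := by rw [hsdef, hC]; simp
    rw [← heq, hτz, hsz]
    simp
  by_cases hδ : C.det = 0
  · -- rank one case
    have hsz : s = 0 := by rw [hsdef, hδ]; simp
    have hτpos : 0 < τ := by
      rcases lt_or_eq_of_le hτ0 with h | h
      · exact h
      exfalso
      apply hC
      have h00 : C 0 0 = 0 := by nlinarith [sq_nonneg (C 0 0), sq_nonneg (C 0 1), sq_nonneg (C 1 0), sq_nonneg (C 1 1)]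
      have h01 : C 0 1 = 0 := by nlinarith [sq_nonneg (C 0 0), sq_nonneg (C 0 1), sq_nonneg (C 1 0), sq_nonneg (C 1 1)]
      have h10 : C 1 0 = 0 := by nlinarith [sq_nonneg (C 0 0), sq_nonneg (C 0 1), sq_nonneg (C 1 0), sq_nonneg (C 1 1)]
      have h11 : C 1 1 = 0 := by nlinarith [sq_nonneg (C 0 0), sq_nonneg (C 0 1), sq_nonneg (C 1 0), sq_nonneg (C 1 1)]
      ext i j
      fin_cases i <;> fin_cases j <;> simp [h00, h01, h10, h11]
    have hNP0 : (C * Cᵀ) * ((C * Cᵀ) - τ • 1) = 0 := by rw [hNP, hδ]; simp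
    have hB : A * ((C * Cᵀ) - τ • 1) = 0 := by
      apply tmul_eq_zero
      rw [Matrix.transpose_mul, hPsym, Matrix.mul_assoc, ← Matrix.mul_assoc Aᵀ A, hN, hNP0,
        Matrix.mul_zero]
    have hANA : A * (C * Cᵀ) = τ • A := by
      rw [Matrix.mul_sub, Matrix.mul_smul, Matrix.mul_one] at hB
      exact sub_eq_zero.mp hB
    have hMsq : (A * Aᵀ) * (A * Aᵀ) = τ • (A * Aᵀ) := by
      calc (A * Aᵀ) * (A * Aᵀ) = (A * (Aᵀ * A)) * Aᵀ := by simp only [Matrix.mul_assoc]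
        _ = (τ • A) * Aᵀ := by rw [hN, hANA]
        _ = τ • (A * Aᵀ) := by rw [Matrix.smul_mul]
    have hsqτ : Real.sqrt τ ≠ 0 := ne_of_gt (Real.sqrt_pos.mpr hτpos)
    have hS : ((Real.sqrt τ)⁻¹ • (A * Aᵀ)).PosSemidef :=
      smul_posSemidef hM (by positivity)
    have hscal : (Real.sqrt τ)⁻¹ * (Real.sqrt τ)⁻¹ * τ = 1 := by
      rw [← Real.mul_self_sqrt hτ0]; field_simp
      rw [Real.sqrt_sq (Real.sqrt_nonneg τ)]
    have hSsq : ((Real.sqrt τ)⁻¹ • (A * Aᵀ)) ^ 2 = A * Aᵀ := by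
      rw [pow_two, Matrix.smul_mul, Matrix.mul_smul, hMsq, smul_smul, smul_smul,
        hscal, one_smul]
    have heq : (Real.sqrt τ)⁻¹ • (A * Aᵀ) = hM.sqrt := hS.eq_sqrt_of_sq_eq hM hSsq
    have htrM : Matrix.trace (A * Aᵀ) = τ := by rw [Matrix.trace_mul_comm, hN]; exact hτdef.symm
    rw [← heq, Matrix.trace_smul, htrM, hsz, smul_eq_mul,
      show τ + 2 * 0 = τ by ring]
    field_simp
    rw [Real.sq_sqrt hτ0]
  · -- invertible case
    have hspos : 0 < s := by rw [hsdef]; exact abs_pos.mpr hδ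
    obtain ⟨r, hrdef⟩ : ∃ t, t = Real.sqrt (τ + 2 * s) := ⟨_, rfl⟩
    rw [← hrdef]
    have hr2 : r ^ 2 = τ + 2 * s := by rw [hrdef]; exact Real.sq_sqrt (by nlinarith)
    have hrpos : 0 < r := by rw [hrdef]; exact Real.sqrt_pos.mpr (by nlinarith)
    obtain ⟨W, hWdef⟩ : ∃ W : Matrix (Fin 2) (Fin 2) ℝ, W = (τ + s) • 1 - C * Cᵀ := ⟨_, rfl⟩
    have hWsym : Wᵀ = W := by
      simp [hWdef, Matrix.transpose_sub, Matrix.transpose_mul]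
    have hdet2 : C.det = C 0 0 * C 1 1 - C 0 1 * C 1 0 := Matrix.det_fin_two C
    have hs2' : s ^ 2 = (C 0 0 * C 1 1 - C 0 1 * C 1 0) ^ 2 := by rw [hs2, hdet2]
    have hW : W.PosSemidef := by
      apply posSemidef_fin_two hWsym
      · simp only [hWdef, Matrix.sub_apply, Matrix.smul_apply, Matrix.one_apply_eq,
          Matrix.mul_apply, Fin.sum_univ_two, Matrix.transpose_apply, smul_eq_mul, mul_one, hτ]
        nlinarith [sq_nonneg (C 1 0), sq_nonneg (C 1 1)]
      · simp only [hWdef, Matrix.sub_apply, Matrix.smul_apply, Matrix.one_apply_eq,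
          Matrix.mul_apply, Fin.sum_univ_two, Matrix.transpose_apply, smul_eq_mul, mul_one, hτ]
        nlinarith [sq_nonneg (C 0 0), sq_nonneg (C 0 1)]
      · simp only [hWdef, Matrix.sub_apply, Matrix.smul_apply, Matrix.one_apply,
          Matrix.mul_apply, Fin.sum_univ_two, Matrix.transpose_apply, smul_eq_mul, hτ]
        norm_num
        nlinarith [hs2', mul_nonneg hs0 hτ0, sq_nonneg s]
    have hWNW : W * (C * Cᵀ) * W = (s^2 * (τ + 2*s)) • (1 : Matrix (Fin 2) (Fin 2) ℝ) := by
      ext i j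
      fin_cases i <;> fin_cases j <;>
        simp only [hWdef, hτ, Matrix.mul_apply, Fin.sum_univ_two, Matrix.sub_apply,
          Matrix.smul_apply, Matrix.one_apply, Matrix.transpose_apply, smul_eq_mul] <;>
        norm_num
      · linear_combination (-(C 1 0^2 + C 1 1^2 + 2*s)) * hs2'
      · linear_combination (C 0 0 * C 1 0 + C 0 1 * C 1 1) * hs2'
      · linear_combination (C 0 0 * C 1 0 + C 0 1 * C 1 1) * hs2'
      · linear_combination (-(C 0 0^2 + C 0 1^2 + 2*s)) * hs2'
    have hSbase : (A * W * Aᵀ).PosSemidef := by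
      have := hW.mul_mul_conjTranspose_same A
      rwa [Matrix.conjTranspose_eq_transpose_of_trivial] at this
    have hS : ((s * r)⁻¹ • (A * W * Aᵀ)).PosSemidef :=
      smul_posSemidef hSbase (by positivity)
    have hmid : (A * W * Aᵀ) * (A * W * Aᵀ) = (s^2 * (τ + 2*s)) • (A * Aᵀ) := by
      calc (A * W * Aᵀ) * (A * W * Aᵀ) = A * (W * ((Aᵀ * A) * (W * Aᵀ))) := by
            simp only [Matrix.mul_assoc]
        _ = A * ((W * (C * Cᵀ) * W) * Aᵀ) := by rw [hN]; simp only [Matrix.mul_assoc]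
        _ = A * (((s^2 * (τ + 2*s)) • (1 : Matrix (Fin 2) (Fin 2) ℝ)) * Aᵀ) := by rw [hWNW]
        _ = (s^2 * (τ + 2*s)) • (A * Aᵀ) := by
            rw [Matrix.smul_mul, Matrix.one_mul, Matrix.mul_smul]
    have hscal : (s * r)⁻¹ * (s * r)⁻¹ * (s^2 * (τ + 2*s)) = 1 := by
      rw [← hr2]
      field_simp
    have hSsq : ((s * r)⁻¹ • (A * W * Aᵀ)) ^ 2 = A * Aᵀ := by
      rw [pow_two, Matrix.smul_mul, Matrix.mul_smul, hmid, smul_smul, smul_smul,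
        hscal, one_smul]
    have heq : (s * r)⁻¹ • (A * W * Aᵀ) = hM.sqrt := hS.eq_sqrt_of_sq_eq hM hSsq
    have htrW : Matrix.trace ((C * Cᵀ) * W) = s * (τ + 2*s) := by
      simp only [hWdef, Matrix.trace_fin_two, Matrix.mul_apply, Fin.sum_univ_two,
        Matrix.sub_apply, Matrix.smul_apply, Matrix.one_apply, Matrix.transpose_apply,
        smul_eq_mul, hτ]
      norm_num
      linear_combination (-2) * hs2'
    have htrAWA : Matrix.trace (A * W * Aᵀ) = s * (τ + 2*s) := by
      rw [Matrix.trace_mul_comm (A * W) Aᵀ, ← Matrix.mul_assoc, hN, htrW]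
    rw [← heq, Matrix.trace_smul, htrAWA, smul_eq_mul, ← hr2]
    field_simp



lemma trace_tmul_nonneg {m n : ℕ} (X : Matrix (Fin m) (Fin n) ℝ) :
    0 ≤ Matrix.trace (Xᵀ * X) := by
  rw [Matrix.trace]
  refine Finset.sum_nonneg fun j _ => ?_
  simp only [Matrix.diag_apply, Matrix.mul_apply, Matrix.transpose_apply]
  exact Finset.sum_nonneg fun i _ => mul_self_nonneg _

lemma frobNorm_sq {m n : ℕ} (X : Matrix (Fin m) (Fin n) ℝ) :
    frobNorm X ^ 2 = Matrix.trace (Xᵀ * X) :=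
  Real.sq_sqrt (trace_tmul_nonneg X)

lemma procrustes_val {m : ℕ} (Fi Fj : Matrix (Fin m) (Fin 2) ℝ)
    (Q : Matrix (Fin 2) (Fin 2) ℝ) (hQ : Qᵀ * Q = 1) :
    frobNorm (Fj * Q - Fi) ^ 2
      = Matrix.trace (Fi * Fiᵀ) + Matrix.trace (Fj * Fjᵀ)
        - 2 * Matrix.trace (Qᵀ * (Fjᵀ * Fi)) := by
  have hQQT : Q * Qᵀ = 1 := mul_eq_one_comm.mp hQ
  rw [frobNorm_sq]
  rw [Matrix.transpose_sub, Matrix.transpose_mul, Matrix.sub_mul, Matrix.mul_sub,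
    Matrix.mul_sub, Matrix.trace_sub, Matrix.trace_sub, Matrix.trace_sub]
  have h1 : Matrix.trace (Qᵀ * Fjᵀ * (Fj * Q)) = Matrix.trace (Fj * Fjᵀ) := by
    rw [Matrix.trace_mul_comm, Matrix.mul_assoc, ← Matrix.mul_assoc Q, hQQT, Matrix.one_mul]
  have h2 : Matrix.trace (Qᵀ * Fjᵀ * Fi) = Matrix.trace (Qᵀ * (Fjᵀ * Fi)) := by
    rw [Matrix.mul_assoc]
  have h3 : Matrix.trace (Fiᵀ * (Fj * Q)) = Matrix.trace (Qᵀ * (Fjᵀ * Fi)) := by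
    rw [← Matrix.trace_transpose (Fiᵀ * (Fj * Q))]
    congr 1
    rw [Matrix.transpose_mul, Matrix.transpose_mul, Matrix.transpose_transpose,
      Matrix.mul_assoc]
  have h4 : Matrix.trace (Fiᵀ * Fi) = Matrix.trace (Fi * Fiᵀ) := Matrix.trace_mul_comm _ _
  rw [h1, h2, h3, h4]
  ring

set_option maxHeartbeats 1000000 in
lemma trace_orth_le {C Q : Matrix (Fin 2) (Fin 2) ℝ} (hQ : Qᵀ * Q = 1) :
    Matrix.trace (Qᵀ * C) ≤ Real.sqrt (Matrix.trace (C * Cᵀ) + 2 * |C.det|) := by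
  have h1 : Q 0 0 ^ 2 + Q 1 0 ^ 2 = 1 := by
    have := congrFun (congrFun hQ 0) 0
    simpa [Matrix.mul_apply, Fin.sum_univ_two, Matrix.one_apply, sq] using this
  have h2 : Q 0 0 * Q 0 1 + Q 1 0 * Q 1 1 = 0 := by
    have := congrFun (congrFun hQ 0) 1
    simpa [Matrix.mul_apply, Fin.sum_univ_two, Matrix.one_apply] using this
  have h3 : Q 0 1 ^ 2 + Q 1 1 ^ 2 = 1 := by
    have := congrFun (congrFun hQ 1) 1
    simpa [Matrix.mul_apply, Fin.sum_univ_two, Matrix.one_apply, sq] using this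
  set p := Q 0 0; set q := Q 1 0; set u := Q 0 1; set v := Q 1 1
  set a := C 0 0; set b := C 0 1; set c := C 1 0; set d := C 1 1
  set ε := p * v - q * u with hεdef
  have hu : u = -(ε * q) := by rw [hεdef]; linear_combination (-u) * h1 + p * h2
  have hv : v = ε * p := by rw [hεdef]; linear_combination (-v) * h1 + q * h2
  have hε2 : ε ^ 2 = 1 := by
    rw [hεdef]; linear_combination (u^2 + v^2) * h1 + (-(p*u + q*v)) * h2 + h3
  have habsε : |ε| = 1 := by
    nlinarith [sq_abs ε, abs_nonneg ε, sq_nonneg (|ε| - 1), sq_nonneg (|ε| + 1), hε2]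
  have hεdet : ε * (a*d - b*c) ≤ |C.det| := by
    calc ε * (a*d - b*c) ≤ |ε * (a*d - b*c)| := le_abs_self _
      _ = |a*d - b*c| := by rw [abs_mul, habsε, one_mul]
      _ = |C.det| := by rw [Matrix.det_fin_two C]
  have hT : Matrix.trace (Qᵀ * C) = p * a + q * c + u * b + v * d := by
    simp [Matrix.trace_fin_two, Matrix.mul_apply, Fin.sum_univ_two]
    ring
  have hτ : Matrix.trace (C * Cᵀ) = a^2 + b^2 + c^2 + d^2 := by
    simp [Matrix.trace_fin_two, Matrix.mul_apply, Fin.sum_univ_two]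
    ring
  rw [hT, hτ]
  have key : (p * a + q * c + u * b + v * d) ^ 2 ≤ a^2 + b^2 + c^2 + d^2 + 2 * |C.det| := by
    rw [hu, hv]
    have e3 : (p*a + q*c + -(ε*q)*b + ε*p*d)^2 = (p*(a+ε*d) + q*(c-ε*b))^2 := by ring
    rw [e3]
    have e1 : (p*(a+ε*d) + q*(c-ε*b))^2 ≤ (a+ε*d)^2 + (c-ε*b)^2 := by
      nlinarith [sq_nonneg (q*(a+ε*d) - p*(c-ε*b)), h1, sq_nonneg (a+ε*d), sq_nonneg (c-ε*b)]
    have e2 : (a+ε*d)^2 + (c-ε*b)^2 = a^2+b^2+c^2+d^2 + 2*(ε*(a*d-b*c)) := by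
      linear_combination (d^2 + b^2) * hε2
    linarith [hεdet]
  calc p * a + q * c + u * b + v * d ≤ |p * a + q * c + u * b + v * d| := le_abs_self _
    _ = Real.sqrt ((p * a + q * c + u * b + v * d) ^ 2) := (Real.sqrt_sq_eq_abs _).symm
    _ ≤ _ := Real.sqrt_le_sqrt key

set_option maxHeartbeats 2000000 in
lemma trace_orth_exists (C : Matrix (Fin 2) (Fin 2) ℝ) :
    ∃ Q : Matrix (Fin 2) (Fin 2) ℝ, Qᵀ * Q = 1 ∧
      Matrix.trace (Qᵀ * C) = Real.sqrt (Matrix.trace (C * Cᵀ) + 2 * |C.det|) := by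
  set a := C 0 0; set b := C 0 1; set c := C 1 0; set d := C 1 1
  have hτ : Matrix.trace (C * Cᵀ) = a^2 + b^2 + c^2 + d^2 := by
    simp [Matrix.trace_fin_two, Matrix.mul_apply, Fin.sum_univ_two]
    ring
  have hdet : C.det = a * d - b * c := Matrix.det_fin_two C
  by_cases hd : 0 ≤ C.det
  · have habs : |C.det| = a * d - b * c := by rw [abs_of_nonneg hd, hdet]
    have hL2' : Matrix.trace (C * Cᵀ) + 2 * |C.det| = (a + d)^2 + (c - b)^2 := by
      rw [hτ, habs]; ring
    set L := Real.sqrt (Matrix.trace (C * Cᵀ) + 2 * |C.det|) with hLdef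
    have hL0 : 0 ≤ L := Real.sqrt_nonneg _
    have hL2 : L ^ 2 = (a + d)^2 + (c - b)^2 := by
      rw [hLdef, Real.sq_sqrt (by rw [hL2']; positivity), hL2']
    by_cases hL : L = 0
    · refine ⟨1, by simp, ?_⟩
      have had : a + d = 0 := by nlinarith [sq_nonneg (a + d), sq_nonneg (c - b)]
      rw [show (1 : Matrix (Fin 2) (Fin 2) ℝ)ᵀ * C = C by simp, Matrix.trace_fin_two, hL]
      exact had
    · have hLpos : 0 < L := lt_of_le_of_ne hL0 (Ne.symm hL)
      refine ⟨!![(a + d)/L, (b - c)/L; (c - b)/L, (a + d)/L], ?_, ?_⟩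
      · ext i j
        fin_cases i <;> fin_cases j <;>
          simp only [Matrix.mul_apply, Fin.sum_univ_two, Matrix.one_apply,
            Matrix.transpose_apply, Matrix.cons_val', Matrix.cons_val_zero, Matrix.cons_val_one,
            Matrix.head_cons, Matrix.head_fin_const, Matrix.empty_val', Matrix.cons_val_fin_one] <;>
          norm_num <;> field_simp <;> linarith [hL2]
      · simp only [Matrix.trace_fin_two, Matrix.mul_apply, Fin.sum_univ_two,
          Matrix.transpose_apply, Matrix.cons_val', Matrix.cons_val_zero, Matrix.cons_val_one,
          Matrix.head_cons, Matrix.head_fin_const, Matrix.empty_val', Matrix.cons_val_fin_one, Matrix.of_apply]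
        field_simp
        linarith [hL2]
  · push_neg at hd
    have habs : |C.det| = -(a * d - b * c) := by rw [abs_of_neg hd, hdet]
    have hL2' : Matrix.trace (C * Cᵀ) + 2 * |C.det| = (a - d)^2 + (b + c)^2 := by
      rw [hτ, habs]; ring
    set L := Real.sqrt (Matrix.trace (C * Cᵀ) + 2 * |C.det|) with hLdef
    have hL0 : 0 ≤ L := Real.sqrt_nonneg _
    have hL2 : L ^ 2 = (a - d)^2 + (b + c)^2 := by
      rw [hLdef, Real.sq_sqrt (by rw [hL2']; positivity), hL2']
    have hLpos : 0 < L := by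
      rw [hLdef]
      apply Real.sqrt_pos.mpr
      rw [hL2']
      nlinarith [sq_nonneg (a - d), sq_nonneg (b + c), hdet, abs_pos.mpr (ne_of_lt hd)]
    have hL : L ≠ 0 := ne_of_gt hLpos
    refine ⟨!![(a - d)/L, (b + c)/L; (b + c)/L, (d - a)/L], ?_, ?_⟩
    · ext i j
      fin_cases i <;> fin_cases j <;>
        simp only [Matrix.mul_apply, Fin.sum_univ_two, Matrix.one_apply,
          Matrix.transpose_apply, Matrix.cons_val', Matrix.cons_val_zero, Matrix.cons_val_one,
          Matrix.head_cons, Matrix.head_fin_const, Matrix.empty_val', Matrix.cons_val_fin_one] <;>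
        norm_num <;> field_simp <;> linarith [hL2]
    · simp only [Matrix.trace_fin_two, Matrix.mul_apply, Fin.sum_univ_two,
        Matrix.transpose_apply, Matrix.cons_val', Matrix.cons_val_zero, Matrix.cons_val_one,
        Matrix.head_cons, Matrix.head_fin_const, Matrix.empty_val', Matrix.cons_val_fin_one, Matrix.of_apply]
      field_simp
      linarith [hL2]


set_option maxHeartbeats 1000000 in
/-- The trace-based expression
`tr(G_i) + tr(G_j) − 2 tr((G_i^{1/2} G_j G_i^{1/2})^{1/2})` for the squared
distance between Gram matrices coincides with the Procrustes-type expression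
`min_{Q ∈ O(2)} ‖F_j Q − F_i‖_F²`. -/
theorem stmt12 (m : ℕ) (hm : 1 ≤ m) (Fi Fj : Matrix (Fin m) (Fin 2) ℝ)
    (hGi : (Fi * Fiᵀ).PosSemidef)
    (hMid : (hGi.sqrt * (Fj * Fjᵀ) * hGi.sqrt).PosSemidef) :
    Matrix.trace (Fi * Fiᵀ) + Matrix.trace (Fj * Fjᵀ)
        - 2 * Matrix.trace hMid.sqrt
      = sInf {x : ℝ | ∃ Q : Matrix (Fin 2) (Fin 2) ℝ,
          Qᵀ * Q = 1 ∧ x = (frobNorm (Fj * Q - Fi)) ^ 2} := by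
  have hsymS : hGi.sqrtᵀ = hGi.sqrt := by
    rw [← Matrix.conjTranspose_eq_transpose_of_trivial]
    exact hGi.posSemidef_sqrt.isHermitian
  obtain ⟨A, hAdef⟩ : ∃ A : Matrix (Fin m) (Fin 2) ℝ, A = hGi.sqrt * Fj := ⟨_, rfl⟩
  obtain ⟨C, hCdef⟩ : ∃ C : Matrix (Fin 2) (Fin 2) ℝ, C = Fjᵀ * Fi := ⟨_, rfl⟩
  have hX : A * Aᵀ = hGi.sqrt * (Fj * Fjᵀ) * hGi.sqrt := by
    rw [hAdef, Matrix.transpose_mul, hsymS]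
    simp only [Matrix.mul_assoc]
  have hM : (A * Aᵀ).PosSemidef := by rw [hX]; exact hMid
  have hN : Aᵀ * A = C * Cᵀ := by
    rw [hAdef, hCdef, Matrix.transpose_mul, hsymS, Matrix.transpose_mul,
      Matrix.transpose_transpose, Matrix.mul_assoc, ← Matrix.mul_assoc hGi.sqrt hGi.sqrt Fj,
      hGi.sqrt_mul_self]
    simp only [Matrix.mul_assoc]
  have hsqrt_eq : hM.sqrt = hMid.sqrt :=
    hM.posSemidef_sqrt.eq_sqrt_of_sq_eq hMid (by rw [hM.sq_sqrt, hX])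
  obtain ⟨R, hRdef⟩ : ∃ R : ℝ, R = Real.sqrt (Matrix.trace (C * Cᵀ) + 2 * |C.det|) := ⟨_, rfl⟩
  have htrace : Matrix.trace hMid.sqrt = R := by
    rw [← hsqrt_eq, trace_sqrt_AAT A C hN hM, hRdef]
  obtain ⟨Q₀, hQ₀, hQ₀tr⟩ := trace_orth_exists C
  have hmem : (Matrix.trace (Fi * Fiᵀ) + Matrix.trace (Fj * Fjᵀ) - 2 * R)
      ∈ {x : ℝ | ∃ Q : Matrix (Fin 2) (Fin 2) ℝ,
          Qᵀ * Q = 1 ∧ x = (frobNorm (Fj * Q - Fi)) ^ 2} := by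
    refine ⟨Q₀, hQ₀, ?_⟩
    rw [procrustes_val Fi Fj Q₀ hQ₀, ← hCdef, hQ₀tr, hRdef]
  have hlb : ∀ x ∈ {x : ℝ | ∃ Q : Matrix (Fin 2) (Fin 2) ℝ,
      Qᵀ * Q = 1 ∧ x = (frobNorm (Fj * Q - Fi)) ^ 2},
      Matrix.trace (Fi * Fiᵀ) + Matrix.trace (Fj * Fjᵀ) - 2 * R ≤ x := by
    rintro x ⟨Q, hQ, rfl⟩
    rw [procrustes_val Fi Fj Q hQ, ← hCdef]
    have := trace_orth_le (C := C) hQ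
    rw [← hRdef] at this
    linarith
  rw [htrace]
  exact (le_antisymm (csInf_le ⟨_, hlb⟩ hmem) (le_csInf ⟨_, hmem⟩ hlb)).symm
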